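/- arXiv:1612.07591 — 2 statements merged into one kernel-verified Lean document; each statement's English description precedes it below -/
import Mathlib

section
/- The series J(x) = Σ_{n≥0} (-x)^n q^{C(n,2)} / ((q;q)_n (xq;q)_n) satisfies the second-order linear q-difference equation (1-xq)·J(x) - (1 - x(1+q))·J(xq) + (x²q²/(1-xq²))·J(xq²) = 0. -/
open PowerSeries

noncomputable section
namespace FC

/-- The field `ℚ(q)` of rational functions in `q`. -/
abbrev K : Type := RatFunc ℚ

/-- The variable `q`. -/
def q : K := RatFunc.X

/-- The q-Pochhammer symbol `(a; q)_n = ∏_{i=0}^{n-1} (1 - a q^i)`. -/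
def poch (a : K) (n : ℕ) : K := ∏ i ∈ Finset.range n, (1 - a * q ^ i)

/-- The power series `(x q^s; q)_n = ∏_{i=0}^{n-1} (1 - q^{s+i} x)` in the variable `x`. -/
def pochX (s n : ℕ) : PowerSeries K :=
  ∏ i ∈ Finset.range n, (1 - PowerSeries.C (q ^ (s + i)) * PowerSeries.X)

/-- `J(x) = Σ_{n≥0} (-x)^n q^{C(n,2)} / ((q;q)_n (xq;q)_n)`, defined coefficientwise:
the coefficient of `x^N` is `Σ_{n=0}^{N} (-1)^n q^{C(n,2)}/(q;q)_n · [x^{N-n}] (xq;q)_n⁻¹`. -/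
def J : PowerSeries K :=
  PowerSeries.mk fun N => ∑ n ∈ Finset.range (N + 1),
    ((-1 : K) ^ n * q ^ n.choose 2 / poch q n) * PowerSeries.coeff (N - n) (pochX 1 n)⁻¹

/-- `H(x) = Σ_{n≥0} (-x)^n q^{C(n,2)} / ((q;q)_n (x;q)_n)`. -/
def H : PowerSeries K :=
  PowerSeries.mk fun N => ∑ n ∈ Finset.range (N + 1),
    ((-1 : K) ^ n * q ^ n.choose 2 / poch q n) * PowerSeries.coeff (N - n) (pochX 0 n)⁻¹

/-- `K(x) = Σ_{n≥0} (x^n q^{n(n+1)/2} / (xq;q)_n) · Σ_{k=0}^n (-1)^k/(q;q)_k`. -/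
def Kq : PowerSeries K :=
  PowerSeries.mk fun N => ∑ n ∈ Finset.range (N + 1),
    (q ^ (n * (n + 1) / 2) * ∑ k ∈ Finset.range (n + 1), (-1 : K) ^ k / poch q k) *
      PowerSeries.coeff (N - n) (pochX 1 n)⁻¹

-- ## auxiliary development

/-- `(q;q)`-type coefficient. -/
def cc (n : ℕ) : K := (-1 : K) ^ n * q ^ n.choose 2 / poch q n

/-- inverse Pochhammer power series -/
def ip (t n : ℕ) : PowerSeries K := (pochX t n)⁻¹

def Ser (d : ℕ → K) (F : ℕ → PowerSeries K) : PowerSeries K :=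
  PowerSeries.mk fun N => ∑ n ∈ Finset.range (N + 1), d n * PowerSeries.coeff (N - n) (F n)

def Phi (s t : ℕ) : PowerSeries K := Ser (fun n => cc n * q ^ (s * n)) (fun n => ip t n)
def Psi : PowerSeries K := Ser (fun n => cc n * q ^ (1 * n)) (fun n => ip 1 (n + 2))

lemma one_sub_q_pow_ne (k : ℕ) : (1 : K) - q ^ (k + 1) ≠ 0 := by
  have h : ((1 : Polynomial ℚ) - Polynomial.X ^ (k+1)) ≠ 0 := by
    intro h
    have := congrArg (Polynomial.eval 0) h
    simp at this
  have hinj := RatFunc.algebraMap_injective ℚ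
  intro h2
  apply h
  apply hinj
  rw [map_sub, map_one, map_pow, RatFunc.algebraMap_X]
  simpa [q] using h2

lemma poch_ne (n : ℕ) : poch q n ≠ 0 := by
  rw [poch]
  rw [Finset.prod_ne_zero_iff]
  intro i _
  have : (1 : K) - q * q ^ i = 1 - q ^ (i + 1) := by ring
  rw [this]
  exact one_sub_q_pow_ne i

lemma cc_rec (n : ℕ) : cc (n + 1) * (1 - q ^ (n + 1)) = -(q ^ n) * cc n := by
  have hp : poch q (n + 1) = poch q n * (1 - q * q ^ n) := Finset.prod_range_succ _ _
  have hc : (n + 1).choose 2 = n.choose 2 + n := by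
    rw [Nat.choose_succ_succ]
    simp [Nat.choose_one_right]
    omega
  have h1 : (1 : K) - q * q ^ n = 1 - q ^ (n + 1) := by ring
  have hne : (1 : K) - q ^ (n + 1) ≠ 0 := one_sub_q_pow_ne n
  have e : ∀ a b c : K, b ≠ 0 → c ≠ 0 → a / (b * c) * c = a / b := by
    intro a b c hb hc; field_simp
  rw [cc, cc, hp, hc, h1, e _ _ _ (poch_ne n) hne]
  field_simp [poch_ne n]
  ring


lemma constCoeff_pochX (t n : ℕ) : constantCoeff (pochX t n) = 1 := by
  rw [pochX, map_prod]
  apply Finset.prod_eq_one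
  intro i _
  simp

lemma pochX_ne (t n : ℕ) : pochX t n ≠ 0 := by
  intro h
  have := constCoeff_pochX t n
  rw [h] at this
  simp at this

lemma pX_mul_ip (t n : ℕ) : pochX t n * ip t n = 1 :=
  PowerSeries.mul_inv_cancel _ (by rw [constCoeff_pochX]; exact one_ne_zero)

lemma eq_ip {t n : ℕ} {g : PowerSeries K} (h : pochX t n * g = 1) : g = ip t n := by
  calc g = (ip t n * pochX t n) * g := by
            rw [mul_comm (ip t n), pX_mul_ip, one_mul]
    _ = ip t n * (pochX t n * g) := by ring
    _ = ip t n := by rw [h, mul_one]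

lemma pochX_succ (t n : ℕ) :
    pochX t (n + 1) = pochX t n * (1 - PowerSeries.C (q ^ (t + n)) * PowerSeries.X) :=
  Finset.prod_range_succ _ _

lemma pochX_succ' (t n : ℕ) :
    pochX t (n + 1) = (1 - PowerSeries.C (q ^ t) * PowerSeries.X) * pochX (t + 1) n := by
  have h := Finset.prod_range_succ' (fun i => 1 - PowerSeries.C (q ^ (t + i)) * PowerSeries.X) n
  rw [pochX, h, add_zero, mul_comm]
  congr 1
  rw [pochX]
  apply Finset.prod_congr rfl
  intro i _
  have : t + (i + 1) = t + 1 + i := by omega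
  rw [this]

lemma peel (t n : ℕ) :
    (1 - PowerSeries.C (q ^ t) * PowerSeries.X) * ip t (n + 1) = ip (t + 1) n := by
  apply eq_ip
  calc pochX (t+1) n * ((1 - PowerSeries.C (q ^ t) * PowerSeries.X) * ip t (n+1))
      = ((1 - PowerSeries.C (q ^ t) * PowerSeries.X) * pochX (t+1) n) * ip t (n+1) := by ring
    _ = pochX t (n+1) * ip t (n+1) := by rw [← pochX_succ']
    _ = 1 := pX_mul_ip _ _

lemma cancel1 (t n : ℕ) :
    pochX t (n + 1) * ip t n = 1 - PowerSeries.C (q ^ (t + n)) * PowerSeries.X := by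
  rw [pochX_succ, mul_right_comm, pX_mul_ip, one_mul]

lemma cancel2 (t n : ℕ) :
    pochX t (n + 1) * ip (t + 1) n = 1 - PowerSeries.C (q ^ t) * PowerSeries.X := by
  rw [pochX_succ', mul_assoc, pX_mul_ip, mul_one]

lemma idI (t n : ℕ) :
    ip t n - PowerSeries.C (q ^ n) * ip (t + 1) n
      = PowerSeries.C (1 - q ^ n) * ip t (n + 1) := by
  apply mul_left_cancel₀ (pochX_ne t (n + 1))
  have h3 : pochX t (n+1) * (PowerSeries.C (1 - q ^ n) * ip t (n+1))
      = PowerSeries.C (1 - q ^ n) := by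
    rw [mul_left_comm, pX_mul_ip, mul_one]
  rw [mul_sub, mul_left_comm, cancel1, cancel2, h3]
  simp only [map_sub, map_one, map_pow]
  ring

lemma idII (t n : ℕ) :
    ip t n - ip (t + 1) n
      = PowerSeries.C (q ^ t * (1 - q ^ n)) * (PowerSeries.X * ip t (n + 1)) := by
  apply mul_left_cancel₀ (pochX_ne t (n + 1))
  have h3 : pochX t (n+1) * (PowerSeries.C (q ^ t * (1 - q ^ n)) * (PowerSeries.X * ip t (n+1)))
      = PowerSeries.C (q ^ t * (1 - q ^ n)) * PowerSeries.X := by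
    calc pochX t (n+1) * (PowerSeries.C (q ^ t * (1 - q ^ n)) * (PowerSeries.X * ip t (n+1)))
        = (PowerSeries.C (q ^ t * (1 - q ^ n)) * PowerSeries.X) * (pochX t (n+1) * ip t (n+1)) := by
          ring
      _ = _ := by rw [pX_mul_ip, mul_one]
  rw [mul_sub, cancel1, cancel2, h3]
  simp only [map_sub, map_one, map_pow, map_mul]
  ring


lemma coeff_Ser (d : ℕ → K) (F : ℕ → PowerSeries K) (N : ℕ) :
    PowerSeries.coeff N (Ser d F)
      = ∑ n ∈ Finset.range (N + 1), d n * PowerSeries.coeff (N - n) (F n) := by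
  rw [Ser, PowerSeries.coeff_mk]

lemma coeff_linear (a : K) (f : PowerSeries K) (m : ℕ) :
    PowerSeries.coeff (m + 1) ((1 - PowerSeries.C a * PowerSeries.X) * f)
      = PowerSeries.coeff (m + 1) f - a * PowerSeries.coeff m f := by
  rw [sub_mul, one_mul, map_sub, mul_assoc, PowerSeries.coeff_C_mul,
    PowerSeries.coeff_succ_X_mul]

lemma coeff_zero_linear (a : K) (f : PowerSeries K) :
    PowerSeries.coeff 0 ((1 - PowerSeries.C a * PowerSeries.X) * f)
      = PowerSeries.coeff 0 f := by
  rw [sub_mul, one_mul, map_sub, mul_assoc, PowerSeries.coeff_C_mul]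
  simp [PowerSeries.coeff_zero_eq_constantCoeff, PowerSeries.constantCoeff_X]

lemma linear_mul_Ser (a : K) (d : ℕ → K) (F : ℕ → PowerSeries K) :
    (1 - PowerSeries.C a * PowerSeries.X) * Ser d F
      = Ser d (fun n => (1 - PowerSeries.C a * PowerSeries.X) * F n) := by
  ext N
  cases N with
  | zero =>
    rw [coeff_zero_linear, coeff_Ser, coeff_Ser]
    simp only [Nat.zero_sub, coeff_zero_linear]
  | succ N =>
    rw [coeff_linear, coeff_Ser, coeff_Ser, coeff_Ser]
    have hterm : ∀ n ∈ Finset.range (N + 1),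
        d n * PowerSeries.coeff (N + 1 - n) ((1 - PowerSeries.C a * PowerSeries.X) * F n)
          = d n * PowerSeries.coeff (N + 1 - n) (F n) - a * (d n * PowerSeries.coeff (N - n) (F n)) := by
      intro n hn
      have hn' : n ≤ N := by simpa [Nat.lt_succ_iff] using hn
      have h1 : N + 1 - n = (N - n) + 1 := by omega
      rw [h1, coeff_linear, ← h1]
      ring
    rw [Finset.sum_range_succ
        (fun n => d n * PowerSeries.coeff (N + 1 - n)
          ((1 - PowerSeries.C a * PowerSeries.X) * F n)) (N + 1)]
    rw [Finset.sum_congr rfl hterm]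
    rw [Finset.sum_range_succ (fun n => d n * PowerSeries.coeff (N + 1 - n) (F n)) (N + 1)]
    have hlast : N + 1 - (N + 1) = 0 := by omega
    rw [hlast, coeff_zero_linear, Finset.sum_sub_distrib, ← Finset.mul_sum]
    ring


lemma ip_zero (t : ℕ) : ip t 0 = 1 := by
  symm
  apply eq_ip
  rw [pochX, Finset.prod_range_zero, one_mul]

lemma lemA : Phi 0 1 - Phi 1 2 = -(PowerSeries.X * Psi) := by
  ext N
  rw [map_sub, map_neg]
  cases N with
  | zero =>
    rw [Phi, Phi, coeff_Ser, coeff_Ser]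
    simp [ip_zero, PowerSeries.coeff_zero_eq_constantCoeff]
  | succ N =>
    rw [Phi, Phi, coeff_Ser, coeff_Ser, ← Finset.sum_sub_distrib]
    have hterm : ∀ n ∈ Finset.range (N + 2),
        cc n * q ^ (0 * n) * PowerSeries.coeff (N + 1 - n) (ip 1 n)
          - cc n * q ^ (1 * n) * PowerSeries.coeff (N + 1 - n) (ip 2 n)
          = cc n * ((1 - q ^ n) * PowerSeries.coeff (N + 1 - n) (ip 1 (n + 1))) := by
      intro n _
      have hI := congrArg (PowerSeries.coeff (N + 1 - n)) (idI 1 n)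
      rw [map_sub, PowerSeries.coeff_C_mul, PowerSeries.coeff_C_mul] at hI
      simp only [show (1:ℕ)+1 = 2 from rfl] at hI
      simp only [zero_mul, pow_zero, one_mul]
      rw [← hI]
      ring
    rw [Finset.sum_congr rfl hterm, Finset.sum_range_succ']
    simp only [pow_zero, sub_self, zero_mul, mul_zero, add_zero]
    have hterm2 : ∀ i ∈ Finset.range (N + 1),
        cc (i + 1) * ((1 - q ^ (i + 1)) * PowerSeries.coeff (N + 1 - (i + 1)) (ip 1 (i + 1 + 1)))
          = -(cc i * q ^ (1 * i) * PowerSeries.coeff (N - i) (ip 1 (i + 2))) := by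
      intro i _
      have hidx : N + 1 - (i + 1) = N - i := by omega
      rw [hidx, ← mul_assoc, cc_rec i]
      ring
    rw [Finset.sum_congr rfl hterm2, Finset.sum_neg_distrib]
    rw [PowerSeries.coeff_succ_X_mul, Psi, coeff_Ser]

lemma lemW : Phi 1 2 - Phi 1 3
    = (PowerSeries.C (q ^ 2) * PowerSeries.X) * (Phi 1 2 - Phi 2 3) := by
  ext N
  rw [map_sub, mul_assoc, PowerSeries.coeff_C_mul]
  cases N with
  | zero =>
    rw [Phi, Phi, coeff_Ser, coeff_Ser]
    simp [ip_zero, PowerSeries.coeff_zero_eq_constantCoeff]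
  | succ N =>
    rw [PowerSeries.coeff_succ_X_mul, map_sub]
    simp only [Phi, coeff_Ser]
    rw [← Finset.sum_sub_distrib, ← Finset.sum_sub_distrib]
    have hterm : ∀ n ∈ Finset.range (N + 2),
        cc n * q ^ (1 * n) * PowerSeries.coeff (N + 1 - n) (ip 2 n)
          - cc n * q ^ (1 * n) * PowerSeries.coeff (N + 1 - n) (ip 3 n)
          = cc n * q ^ n * (q ^ 2 * (1 - q ^ n))
              * PowerSeries.coeff (N + 1 - n) (PowerSeries.X * ip 2 (n + 1)) := by
      intro n _
      have hI := congrArg (PowerSeries.coeff (N + 1 - n)) (idII 2 n)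
      rw [map_sub, PowerSeries.coeff_C_mul] at hI
      simp only [show (2:ℕ)+1 = 3 from rfl] at hI
      rw [one_mul, ← mul_sub, hI]
      ring
    rw [Finset.sum_congr rfl hterm, Finset.sum_range_succ]
    have hzero : PowerSeries.coeff (N + 1 - (N + 1)) (PowerSeries.X * ip 2 (N + 1 + 1)) = 0 := by
      have : N + 1 - (N + 1) = 0 := by omega
      rw [this]
      simp [PowerSeries.coeff_zero_eq_constantCoeff, PowerSeries.constantCoeff_X]
    rw [hzero, mul_zero, add_zero]
    have hterm2 : ∀ n ∈ Finset.range (N + 1),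
        cc n * q ^ n * (q ^ 2 * (1 - q ^ n))
            * PowerSeries.coeff (N + 1 - n) (PowerSeries.X * ip 2 (n + 1))
          = q ^ 2 * (cc n * q ^ n * ((1 - q ^ n) * PowerSeries.coeff (N - n) (ip 2 (n + 1)))) := by
      intro n hn
      have hn' : n ≤ N := by simpa [Nat.lt_succ_iff] using hn
      have h1 : N + 1 - n = (N - n) + 1 := by omega
      rw [h1, PowerSeries.coeff_succ_X_mul]
      ring
    rw [Finset.sum_congr rfl hterm2]
    have hterm3 : ∀ n ∈ Finset.range (N + 1),
        cc n * q ^ (1 * n) * PowerSeries.coeff (N - n) (ip 2 n)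
          - cc n * q ^ (2 * n) * PowerSeries.coeff (N - n) (ip 3 n)
          = cc n * q ^ n * ((1 - q ^ n) * PowerSeries.coeff (N - n) (ip 2 (n + 1))) := by
      intro n _
      have hI := congrArg (PowerSeries.coeff (N - n)) (idI 2 n)
      rw [map_sub, PowerSeries.coeff_C_mul, PowerSeries.coeff_C_mul] at hI
      simp only [show (2:ℕ)+1 = 3 from rfl] at hI
      rw [← hI, one_mul, two_mul, pow_add]
      ring
    rw [Finset.sum_congr rfl hterm3, ← Finset.mul_sum]

lemma pochX_one_two : pochX 1 2
    = (1 - PowerSeries.C (q ^ 1) * PowerSeries.X) * (1 - PowerSeries.C (q ^ 2) * PowerSeries.X) := by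
  rw [pochX, Finset.prod_range_succ, Finset.prod_range_succ, Finset.prod_range_zero, one_mul]

lemma lemU : pochX 1 2 * Psi = Phi 1 3 := by
  rw [pochX_one_two, mul_comm (1 - PowerSeries.C (q ^ 1) * PowerSeries.X), mul_assoc]
  rw [Psi, linear_mul_Ser]
  have h1 : (fun n => (1 - PowerSeries.C (q ^ 1) * PowerSeries.X) * ip 1 (n + 2))
      = fun n => ip 2 (n + 1) := funext fun n => peel 1 (n + 1)
  rw [h1, linear_mul_Ser]
  have h2 : (fun n => (1 - PowerSeries.C (q ^ 2) * PowerSeries.X) * ip 2 (n + 1))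
      = fun n => ip 3 n := funext fun n => peel 2 n
  rw [h2, Phi]


lemma J_eq : J = Phi 0 1 := by
  ext N
  rw [J, PowerSeries.coeff_mk, Phi, coeff_Ser]
  apply Finset.sum_congr rfl
  intro n _
  rw [cc, ip]
  ring

lemma rescale_C' (a b : K) : rescale a (PowerSeries.C b) = PowerSeries.C b := by
  ext n
  rw [PowerSeries.coeff_rescale]
  cases n with
  | zero => simp
  | succ n => simp [PowerSeries.coeff_C]

lemma rescale_pochX (s n : ℕ) : rescale (q ^ s) (pochX 1 n) = pochX (s + 1) n := by
  rw [pochX, pochX, map_prod]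
  apply Finset.prod_congr rfl
  intro i _
  rw [map_sub, map_one, map_mul, rescale_C', PowerSeries.rescale_X]
  rw [← mul_assoc, ← map_mul, ← pow_add]
  have h : 1 + i + s = s + 1 + i := by omega
  rw [h]

lemma rescale_ip (s n : ℕ) : rescale (q ^ s) (ip 1 n) = ip (s + 1) n := by
  apply eq_ip
  rw [← rescale_pochX s n, ← map_mul, pX_mul_ip, map_one]

lemma rescale_J (s : ℕ) : rescale (q ^ s) J = Phi s (s + 1) := by
  rw [J_eq, Phi, Phi, Ser, Ser, PowerSeries.rescale_mk]
  ext N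
  rw [PowerSeries.coeff_mk, PowerSeries.coeff_mk, Finset.mul_sum]
  apply Finset.sum_congr rfl
  intro n hn
  have hn' : n ≤ N := by simpa [Nat.lt_succ_iff] using hn
  rw [← rescale_ip s n, PowerSeries.coeff_rescale, ← pow_mul, ← pow_mul]
  have hs : n + (N - n) = N := by omega
  have : q ^ (s * N) = q ^ (s * n) * q ^ (s * (N - n)) := by
    calc q ^ (s * N) = q ^ (s * (n + (N - n))) := by rw [hs]
      _ = _ := by rw [Nat.mul_add, pow_add]
  rw [this]
  ring

lemma A_mul_inv : (1 - PowerSeries.C (q ^ 2) * PowerSeries.X)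
    * (1 - PowerSeries.C (q ^ 2) * PowerSeries.X)⁻¹ = 1 := by
  apply PowerSeries.mul_inv_cancel
  simp [PowerSeries.constantCoeff_X]

lemma A_ne : (1 - PowerSeries.C (q ^ 2) * PowerSeries.X) ≠ 0 := by
  intro h
  have h2 := congrArg (constantCoeff) h
  simp [PowerSeries.constantCoeff_X] at h2


/-- `(1-xq)·J(x) - (1-x(1+q))·J(xq) + (x²q²/(1-xq²))·J(xq²) = 0`. -/
theorem stmt4 :
    (1 - PowerSeries.C q * PowerSeries.X) * J
      - (1 - PowerSeries.C (1 + q) * PowerSeries.X) * rescale q J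
      + PowerSeries.X ^ 2 * PowerSeries.C (q ^ 2) *
          (1 - PowerSeries.C (q ^ 2) * PowerSeries.X)⁻¹ * rescale (q ^ 2) J = 0 := by
  have hr1 : rescale q J = Phi 1 2 := by
    have := rescale_J 1
    rwa [pow_one] at this
  have hr2 : rescale (q ^ 2) J = Phi 2 3 := rescale_J 2
  rw [hr1, hr2, J_eq]
  have e1 := lemA
  have e2 := lemW
  have e3 : (1 - PowerSeries.C (q ^ 1) * PowerSeries.X)
      * (1 - PowerSeries.C (q ^ 2) * PowerSeries.X) * Psi = Phi 1 3 := by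
    rw [← pochX_one_two]; exact lemU
  have hU := A_mul_inv
  have key : (1 - PowerSeries.C (q ^ 2) * PowerSeries.X) *
      ((1 - PowerSeries.C q * PowerSeries.X) * Phi 0 1
        - (1 - PowerSeries.C (1 + q) * PowerSeries.X) * Phi 1 2
        + PowerSeries.X ^ 2 * PowerSeries.C (q ^ 2) *
            (1 - PowerSeries.C (q ^ 2) * PowerSeries.X)⁻¹ * Phi 2 3) = 0 := by
    have hq1 : PowerSeries.C (q ^ 1) = PowerSeries.C q := by rw [pow_one]
    rw [hq1] at e3
    have hC : PowerSeries.C (1 + q) = 1 + PowerSeries.C q := by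
      rw [map_add, map_one]
    rw [hC]
    linear_combination
      ((1 - PowerSeries.C (q ^ 2) * PowerSeries.X) * (1 - PowerSeries.C q * PowerSeries.X)) * e1
      + PowerSeries.X * e2 - PowerSeries.X * e3
      + (PowerSeries.X ^ 2 * PowerSeries.C (q ^ 2) * Phi 2 3) * hU
  rcases mul_eq_zero.mp key with h | h
  · exact absurd h A_ne
  · exact h


end FC
end
end

section
/- With K-cal(x) = Σ_{n≥0} x^n q^{n(n+1)/2} Σ_{k=0}^{⌊n/2⌋} (-1)^k/(q²;q²)_k and J-cal(x) = Σ_{n≥0} (-1)^{⌈n/2⌉} x^n q^{n(n-1)/2} / (q²;q²)_{⌊n/2⌋}, one has J-cal(x) = (1-x)·K-cal(x) - qx·K-cal(xq) + x³q³·K-cal(xq²). -/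
open PowerSeries

noncomputable section
namespace FC

/-- `(q²;q²)_m = ∏_{i=1}^{m} (1 - q^{2i})`. -/
def poch2 (m : ℕ) : K := ∏ i ∈ Finset.range m, (1 - q ^ (2 * (i + 1)))

/-- `𝒥(x) = Σ_{n≥0} (-1)^{⌈n/2⌉} x^n q^{C(n,2)} / (q²;q²)_{⌊n/2⌋}`. -/
def Jcal : PowerSeries K :=
  PowerSeries.mk fun n => (-1 : K) ^ ((n + 1) / 2) * q ^ n.choose 2 / poch2 (n / 2)

/-- `𝒦(x) = Σ_{n≥0} x^n q^{n(n+1)/2} Σ_{k=0}^{⌊n/2⌋} (-1)^k/(q²;q²)_k`. -/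
def Kcal : PowerSeries K :=
  PowerSeries.mk fun n =>
    q ^ (n * (n + 1) / 2) * ∑ k ∈ Finset.range (n / 2 + 1), (-1 : K) ^ k / poch2 k

lemma q_pow_ne_one (k : ℕ) (hk : 0 < k) : q ^ k ≠ 1 := by
  intro h
  have : (Polynomial.X : Polynomial ℚ) ^ k = 1 := by
    apply RatFunc.algebraMap_injective ℚ
    simpa [q, map_pow, RatFunc.algebraMap_X] using h
  have := congrArg Polynomial.natDegree this
  simp [Polynomial.natDegree_X_pow] at this
  omega

lemma poch2_ne_zero (m : ℕ) : poch2 m ≠ 0 := by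
  apply Finset.prod_ne_zero_iff.2
  intro i _ h
  exact q_pow_ne_one (2*(i+1)) (by omega) (by linear_combination -h)

lemma poch2_succ (m : ℕ) : poch2 (m+1) = poch2 m * (1 - q ^ (2*(m+1))) :=
  Finset.prod_range_succ _ _

def S (m : ℕ) : K := ∑ k ∈ Finset.range (m + 1), (-1 : K) ^ k / poch2 k

lemma S_succ (m : ℕ) : S (m+1) = S m + (-1:K)^(m+1) / poch2 (m+1) :=
  Finset.sum_range_succ _ _

lemma keyEven (m : ℕ) :
    q^(2*(m+2)) * S (m+2) - (1 + q^(2*(m+2))) * S (m+1) + S m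
      = (-1:K)^(m+2) / poch2 (m+2) := by
  rw [S_succ (m+1), S_succ m, poch2_succ (m+1)]
  have h1 := poch2_ne_zero (m+1)
  have h2 : (1 : K) - q ^ (2*(m+2)) ≠ 0 := fun h =>
    q_pow_ne_one (2*(m+2)) (by omega) (by linear_combination -h)
  field_simp
  ring

lemma keyOdd (m : ℕ) :
    q^(2*m+3) * S (m+1) - (1 + q^(2*m+3)) * S (m+1) + S m
      = (-1:K)^(m+2) / poch2 (m+1) := by
  rw [S_succ m]
  ring

lemma coeffRHS (n : ℕ) : coeff (n+3) ((1 - PowerSeries.X) * Kcal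
      - PowerSeries.C q * PowerSeries.X * rescale q Kcal
      + PowerSeries.X ^ 3 * PowerSeries.C (q ^ 3) * rescale (q ^ 2) Kcal)
    = coeff (n+3) Kcal - coeff (n+2) Kcal - q^(n+3) * coeff (n+2) Kcal
      + q^(2*n+3) * coeff n Kcal := by
  rw [show PowerSeries.C q * PowerSeries.X * rescale q Kcal
      = PowerSeries.X * (PowerSeries.C q * rescale q Kcal) from by ring,
    show PowerSeries.X ^ 3 * PowerSeries.C (q^3) * rescale (q^2) Kcal
      = PowerSeries.X ^ 3 * (PowerSeries.C (q^3) * rescale (q^2) Kcal) from by ring,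
    sub_mul, one_mul]
  simp only [map_add, map_sub, coeff_succ_X_mul, coeff_X_pow_mul, coeff_C_mul, coeff_rescale]
  ring

lemma coeffK (n : ℕ) : coeff n Kcal = q ^ (n * (n + 1) / 2) * S (n / 2) := by
  simp [Kcal, S]

/-- `𝒥(x) = (1-x)·𝒦(x) - qx·𝒦(xq) + x³q³·𝒦(xq²)`. -/
theorem stmt12 :
    Jcal = (1 - PowerSeries.X) * Kcal
      - PowerSeries.C q * PowerSeries.X * rescale q Kcal
      + PowerSeries.X ^ 3 * PowerSeries.C (q ^ 3) * rescale (q ^ 2) Kcal := by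
  ext n
  have h2 : (1 : K) - q ^ 2 ≠ 0 := fun h =>
    q_pow_ne_one 2 (by omega) (by linear_combination -h)
  rcases n with _|_|_|n
  · simp [Jcal, Kcal, poch2, coeff_zero_eq_constantCoeff, map_sub, map_mul]
  · rw [show PowerSeries.C q * PowerSeries.X * rescale q Kcal
        = PowerSeries.X * (PowerSeries.C q * rescale q Kcal) from by ring,
      show PowerSeries.X ^ 3 * PowerSeries.C (q^3) * rescale (q^2) Kcal
        = PowerSeries.X ^ 3 * (PowerSeries.C (q^3) * rescale (q^2) Kcal) from by ring,
      sub_mul, one_mul]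
    simp only [map_add, map_sub, coeff_succ_X_mul, coeff_X_pow_mul', coeff_C_mul, coeff_rescale]
    norm_num [Jcal, Kcal, poch2]
  · rw [show PowerSeries.C q * PowerSeries.X * rescale q Kcal
        = PowerSeries.X * (PowerSeries.C q * rescale q Kcal) from by ring,
      show PowerSeries.X ^ 3 * PowerSeries.C (q^3) * rescale (q^2) Kcal
        = PowerSeries.X ^ 3 * (PowerSeries.C (q^3) * rescale (q^2) Kcal) from by ring,
      sub_mul, one_mul]
    simp only [map_add, map_sub, coeff_succ_X_mul, coeff_X_pow_mul', coeff_C_mul, coeff_rescale]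
    norm_num [Jcal, Kcal, poch2, Finset.sum_range_succ, Finset.prod_range_succ]
    field_simp
    ring
  rw [coeffRHS, coeffK, coeffK, coeffK]
  rcases Nat.even_or_odd n with ⟨m, rfl⟩ | ⟨m, rfl⟩
  · -- index = 2m+3, odd
    rw [show m+m+1+1+1 = m+m+3 from by omega]
    have e1 : (m + m + 3) * (m + m + 3 + 1) / 2 = (m+1)*(2*m+3) + (2*m+3) := by
      rw [show (m + m + 3) * (m + m + 3 + 1) = 2*((m+1)*(2*m+3) + (2*m+3)) from by ring, Nat.mul_div_cancel_left _ two_pos]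
    have e2 : (m + m + 2) * (m + m + 3) / 2 = (m+1)*(2*m+3) := by
      rw [show (m + m + 2) * (m + m + 3) = 2*((m+1)*(2*m+3)) from by ring, Nat.mul_div_cancel_left _ two_pos]
    have e3 : (m + m) * (m + m + 1) / 2 + (2*(m+m)+3) = (m+1)*(2*m+3) := by
      rw [show (m + m) * (m + m + 1) = 2*(m*(2*m+1)) from by ring, Nat.mul_div_cancel_left _ two_pos]; ring
    have e4 : (m + m + 3) / 2 = m + 1 := by omega
    have e5 : (m + m + 2) / 2 = m + 1 := by omega
    have e6 : (m + m) / 2 = m := by omega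
    have e7 : (m + m + 3 + 1) / 2 = m + 2 := by omega
    have e8 : (m + m + 3).choose 2 = (m+1)*(2*m+3) := by
      rw [Nat.choose_two_right, show (m+m+3)-1 = m+m+2 from rfl, show (m+m+3)*(m+m+2) = 2*((m+1)*(2*m+3)) from by ring, Nat.mul_div_cancel_left _ two_pos]
    rw [show q ^ (2*(m+m)+3) * (q ^ ((m+m)*(m+m+1)/2) * S ((m+m)/2))
        = q ^ ((m+m)*(m+m+1)/2 + (2*(m+m)+3)) * S ((m+m)/2) from by rw [pow_add]; ring,
      e1, e2, e3, e5, e6, Jcal, coeff_mk, e7, e8, e4, pow_add]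
    linear_combination -(q:K) ^ ((m+1)*(2*m+3)) * keyOdd m
  · -- index = 2m+4, even
    rw [show 2*m+1+1+1+1 = 2*m+1+3 from by omega]
    have e1 : (2*m+1 + 3) * (2*m+1+3+1) / 2 = (m+2)*(2*m+3) + 2*(m+2) := by
      rw [show (2*m+1 + 3) * (2*m+1+3+1) = 2*((m+2)*(2*m+3) + 2*(m+2)) from by ring, Nat.mul_div_cancel_left _ two_pos]
    have e2 : (2*m+1+2) * (2*m+1+2+1) / 2 = (m+2)*(2*m+3) := by
      rw [show (2*m+1+2) * (2*m+1+2+1) = 2*((m+2)*(2*m+3)) from by ring, Nat.mul_div_cancel_left _ two_pos]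
    have e3 : (2*m+1) * (2*m+1+1) / 2 + (2*(2*m+1)+3) = (m+2)*(2*m+3) := by
      rw [show (2*m+1) * (2*m+1+1) = 2*((2*m+1)*(m+1)) from by ring, Nat.mul_div_cancel_left _ two_pos]; ring
    have e4 : (2*m+1+3) / 2 = m + 2 := by omega
    have e5 : (2*m+1+2) / 2 = m + 1 := by omega
    have e6 : (2*m+1) / 2 = m := by omega
    have e7 : (2*m+1+3+1) / 2 = m + 2 := by omega
    have e8 : (2*m+1+3).choose 2 = (m+2)*(2*m+3) := by
      rw [Nat.choose_two_right, show (2*m+1+3)-1 = 2*m+3 from rfl, show (2*m+1+3)*(2*m+3) = 2*((m+2)*(2*m+3)) from by ring, Nat.mul_div_cancel_left _ two_pos]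
    rw [show q ^ (2*(2*m+1)+3) * (q ^ ((2*m+1)*(2*m+1+1)/2) * S ((2*m+1)/2))
        = q ^ ((2*m+1)*(2*m+1+1)/2 + (2*(2*m+1)+3)) * S ((2*m+1)/2) from by rw [pow_add]; ring,
      e1, e2, e3, e5, e6, Jcal, coeff_mk, e7, e8, e4, pow_add]
    have h := keyEven m
    rw [show 2*(m+2) = 2*m+4 from by ring] at h ⊢
    linear_combination -(q:K) ^ ((m+2)*(2*m+3)) * h

end FC
end
end
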